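/- Let T be a tubing of a finite connected simple graph Γ. For any tubing S of the iterated reconnected complement Γ_T^*, the substitution T •_Γ S is a tubing of Γ containing T. More generally, for any tube t ∈ T and any tubing S of (Γ_t)_{T|_t}^*, the t-substitution γ_t(T;S) is a tubing of Γ containing T. -/

import Mathlib

open scoped Classical
open TensorProduct

noncomputable section

/-- A finite simple graph whose vertices are a finite set of (totally ordered) naturals. -/
structure FinGraph : Type where
  verts : Finset ℕ
  Adj : ℕ → ℕ → Prop
  symm : ∀ v w, Adj v w → Adj w v
  loopless : ∀ v, ¬ Adj v v
  support : ∀ v w, Adj v w → v ∈ verts ∧ w ∈ verts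

namespace CDTub

/-- Connectivity of a vertex set within a graph: any two of its vertices are joined by a
walk staying inside the set. -/
def VConn (G : FinGraph) (s : Finset ℕ) : Prop :=
  ∀ v ∈ s, ∀ w ∈ s, Relation.ReflTransGen (fun a b => a ∈ s ∧ b ∈ s ∧ G.Adj a b) v w

/-- A tube: a nonempty set of vertices inducing a connected subgraph. -/
def IsTube (G : FinGraph) (t : Finset ℕ) : Prop :=
  t.Nonempty ∧ t ⊆ G.verts ∧ VConn G t

/-- A connected (nonempty) graph: the universal tube is a tube. -/
def IsConnGraph (G : FinGraph) : Prop := IsTube G G.verts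

/-- Two vertex sets are far apart: disjoint and with no edge between them. -/
def FarApart (G : FinGraph) (a b : Finset ℕ) : Prop :=
  Disjoint a b ∧ ¬ ∃ v ∈ a, ∃ w ∈ b, G.Adj v w

/-- Compatible tubes: nested or far apart. -/
def Compatible (G : FinGraph) (a b : Finset ℕ) : Prop :=
  a ⊆ b ∨ b ⊆ a ∨ FarApart G a b

/-- Linked tubes: disjoint and joined by an edge. -/
def Linked (G : FinGraph) (a b : Finset ℕ) : Prop :=
  Disjoint a b ∧ ∃ v ∈ a, ∃ w ∈ b, G.Adj v w

/-- A tubing of a connected graph: pairwise compatible tubes containing the universal tube. -/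
def IsTubing (G : FinGraph) (T : Finset (Finset ℕ)) : Prop :=
  G.verts ∈ T ∧ (∀ t ∈ T, IsTube G t) ∧
    ∀ t ∈ T, ∀ t' ∈ T, t ≠ t' → Compatible G t t'

/-- Induced subgraph on a set of vertices. -/
def induce (G : FinGraph) (t : Finset ℕ) : FinGraph where
  verts := t
  Adj v w := v ∈ t ∧ w ∈ t ∧ G.Adj v w
  symm := fun v w h => ⟨h.2.1, h.1, G.symm v w h.2.2⟩
  loopless := fun v h => G.loopless v h.2.2
  support := fun _ _ h => ⟨h.1, h.2.1⟩

/-- Simultaneous reconnected complement with respect to a family `F` of tubes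
(for a single tube, or a family of pairwise far apart tubes, this is the (iterated)
reconnected complement). -/
def reconnAll (G : FinGraph) (F : Finset (Finset ℕ)) : FinGraph where
  verts := G.verts \ F.biUnion id
  Adj v w := v ≠ w ∧ v ∈ G.verts \ F.biUnion id ∧ w ∈ G.verts \ F.biUnion id ∧
    (G.Adj v w ∨ ∃ f ∈ F, (∃ u ∈ f, G.Adj v u) ∧ ∃ u' ∈ f, G.Adj w u')
  symm := by
    rintro v w ⟨hne, hv, hw, h⟩
    refine ⟨hne.symm, hw, hv, ?_⟩
    rcases h with h | ⟨f, hf, h1, h2⟩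
    · exact Or.inl (G.symm _ _ h)
    · exact Or.inr ⟨f, hf, h2, h1⟩
  loopless := fun v h => h.1 rfl
  support := fun _ _ h => ⟨h.2.1, h.2.2.1⟩

/-- Reconnected complement `Γ_t^*` of a graph with respect to a tube. -/
def reconn (G : FinGraph) (t : Finset ℕ) : FinGraph := reconnAll G {t}

/-- The proper tubes of a tubing. -/
def properTubes (G : FinGraph) (T : Finset (Finset ℕ)) : Finset (Finset ℕ) :=
  T.filter (fun s => s ≠ G.verts)

/-- The maximal proper tubes of a tubing. -/
def MaxtP (G : FinGraph) (T : Finset (Finset ℕ)) : Finset (Finset ℕ) :=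
  (properTubes G T).filter (fun s => ∀ s' ∈ properTubes G T, s ⊆ s' → s = s')

/-- The iterated reconnected complement `Γ_T^*` with respect to the maximal proper tubes. -/
def gammaStar (G : FinGraph) (T : Finset (Finset ℕ)) : FinGraph :=
  reconnAll G (MaxtP G T)

/-- Restriction `T|_t` of a tubing to a tube. -/
def restrictT (T : Finset (Finset ℕ)) (t : Finset ℕ) : Finset (Finset ℕ) :=
  T.filter (fun s => s ⊆ t)

/-- For a tube `s` of `Γ_T^*`, the tube `s̃` of `Γ`: the union of `s` with all maximal
proper tubes of `T` linked to `s`. -/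
def tildeT (G : FinGraph) (T : Finset (Finset ℕ)) (s : Finset ℕ) : Finset ℕ :=
  s ∪ ((MaxtP G T).filter (fun m => Linked G m s)).biUnion id

/-- Substitution `T •_Γ S` of a tubing `S` of `Γ_T^*` into the tubing `T`. -/
def substT (G : FinGraph) (T S : Finset (Finset ℕ)) : Finset (Finset ℕ) :=
  T ∪ S.image (tildeT G T)

/-- The `t`-substitution `γ_t(T;S) = T ∪ (T|_t •_{Γ_t} S)`. -/
def gammaSub (G : FinGraph) (T : Finset (Finset ℕ)) (t : Finset ℕ)
    (S : Finset (Finset ℕ)) : Finset (Finset ℕ) :=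
  T ∪ substT (induce G t) (restrictT T t) S

/-- The tubing `T_t^*` induced on the reconnected complement `Γ_t^*`. -/
def indStar (T : Finset (Finset ℕ)) (t : Finset ℕ) : Finset (Finset ℕ) :=
  T.filter (fun s => Disjoint s t) ∪ (T.filter (fun s => t ⊂ s)).image (fun s => s \ t)

/-- The operation `T ◇ S` of Definition 2.4(2). -/
def diamond (G : FinGraph) (T : Finset (Finset ℕ)) (t : Finset ℕ)
    (S : Finset (Finset ℕ)) : Finset (Finset ℕ) :=
  T ∪ S.filter (fun s => ¬ Linked G s t) ∪
    (S.filter (fun s => Linked G s t)).image (fun s => s ∪ t)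

/-- The tubes of `T`, viewed as subsets of the subtype of vertices. -/
def tubeSets (G : FinGraph) (T : Finset (Finset ℕ)) : Set (Set {x // x ∈ G.verts}) :=
  {U | ∃ t ∈ T, U = {x : {x // x ∈ G.verts} | (x : ℕ) ∈ t}}

/-- The topology on the vertex set generated by the tubes of `T`. -/
def tubingTop (G : FinGraph) (T : Finset (Finset ℕ)) :
    TopologicalSpace {x // x ∈ G.verts} :=
  TopologicalSpace.generateFrom (tubeSets G T)

/-- One-line notation of the permutation `σ_t`: the vertices of `t` in increasing order
followed by the remaining vertices in increasing order. -/
def sigmaList (X t : Finset ℕ) : List ℕ :=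
  t.sort (· ≤ ·) ++ (X \ t).sort (· ≤ ·)

/-- Number of `Γ`-inversions of a permutation given by its one-line notation `l`:
pairs of positions `p < q` carrying values `a > b` which form an edge of `Γ`. -/
def invCount (G : FinGraph) (l : List ℕ) : ℕ :=
  ((Finset.range l.length ×ˢ Finset.range l.length).filter
    (fun pq => pq.1 < pq.2 ∧ l.getD pq.2 0 < l.getD pq.1 0 ∧
      G.Adj (l.getD pq.1 0) (l.getD pq.2 0))).card

/-- The signature `sgn^Γ(σ) = (-1)^{inv_Γ(σ)}`. -/
def graphSgn (G : FinGraph) (l : List ℕ) : ℤ := (-1) ^ invCount G l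

/-- Rank (1-based) of `v` inside a finite set `X` of naturals: the order-preserving
relabelling of `X` by `{1,…,|X|}`. -/
def rk (X : Finset ℕ) (v : ℕ) : ℕ := (X.filter (fun u => u ≤ v)).card

/-- Order-preserving relabelling of a graph by the initial segment `{1,…,n}`. -/
def relabelG (G : FinGraph) : FinGraph where
  verts := G.verts.image (rk G.verts)
  Adj i j := i ≠ j ∧ ∃ v w, G.Adj v w ∧ i = rk G.verts v ∧ j = rk G.verts w
  symm := by
    rintro i j ⟨hne, v, w, h, hi, hj⟩
    exact ⟨hne.symm, w, v, G.symm _ _ h, hj, hi⟩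
  loopless := fun _ h => h.1 rfl
  support := by
    rintro i j ⟨hne, v, w, h, hi, hj⟩
    exact ⟨Finset.mem_image.mpr ⟨v, (G.support _ _ h).1, hi.symm⟩,
      Finset.mem_image.mpr ⟨w, (G.support _ _ h).2, hj.symm⟩⟩

/-- Order-preserving relabelling of a subset of `X`. -/
def relabelF (X t : Finset ℕ) : Finset ℕ := t.image (rk X)

/-- Order-preserving relabelling of a family of subsets of `X`. -/
def relabelT (X : Finset ℕ) (T : Finset (Finset ℕ)) : Finset (Finset ℕ) :=
  T.image (relabelF X)

/-- Connected components (in `G`) of a set of vertices. -/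
def comps (G : FinGraph) (s : Finset ℕ) : Finset (Finset ℕ) :=
  s.image (fun v => s.filter (fun w =>
    Relation.ReflTransGen (fun a b => a ∈ s ∧ b ∈ s ∧ G.Adj a b) v w))

/-- The restriction map `res_Ω^Γ` on tubings: replace each tube by its connected
components in `Ω`. -/
def resT (Om : FinGraph) (T : Finset (Finset ℕ)) : Finset (Finset ℕ) :=
  T.biUnion (comps Om)

/-- Shift of a vertex set by `n`. -/
def shiftF (n : ℕ) (s : Finset ℕ) : Finset ℕ := s.image (fun v => v + n)

/-- Shift of a family of vertex sets by `n`. -/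
def shiftT (n : ℕ) (S : Finset (Finset ℕ)) : Finset (Finset ℕ) := S.image (shiftF n)

/-- Shift of a graph by `n`. -/
def shiftG (n : ℕ) (G : FinGraph) : FinGraph where
  verts := shiftF n G.verts
  Adj v w := ∃ a b, G.Adj a b ∧ v = a + n ∧ w = b + n
  symm := by
    rintro v w ⟨a, b, h, rfl, rfl⟩
    exact ⟨b, a, G.symm _ _ h, rfl, rfl⟩
  loopless := by
    rintro v ⟨a, b, h, ha, hb⟩
    have : a = b := by omega
    exact G.loopless b (this ▸ h)
  support := by
    rintro v w ⟨a, b, h, rfl, rfl⟩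
    exact ⟨Finset.mem_image.mpr ⟨a, (G.support _ _ h).1, rfl⟩,
      Finset.mem_image.mpr ⟨b, (G.support _ _ h).2, rfl⟩⟩

/-- `X_T` : the vertices belonging to no proper tube of `T`. -/
def freeVerts (G : FinGraph) (T : Finset (Finset ℕ)) : Finset ℕ :=
  G.verts.filter (fun v => ∀ s ∈ T, s ≠ G.verts → v ∉ s)

/-- The endpoint `max X_T` of the joining edge. -/
def joinA (G : FinGraph) (T : Finset (Finset ℕ)) : ℕ :=
  WithBot.unbotD 0 (freeVerts G T).max

/-- The endpoint `n + min X_S` of the joining edge. -/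
def joinB (Om : FinGraph) (S : Finset (Finset ℕ)) (n : ℕ) : ℕ :=
  n + WithTop.untopD 0 (freeVerts Om S).min

/-- Vertex set of the joined graph `Γ ∪_{T,S} Ω`. -/
def joinVerts (G Om : FinGraph) (n : ℕ) : Finset ℕ := G.verts ∪ shiftF n Om.verts

/-- The joined graph `Γ ∪_{T,S} Ω`: the disjoint union (with `Ω` shifted by `n`)
plus one edge from `max X_T` to `n + min X_S`. -/
def joinG (G Om : FinGraph) (T S : Finset (Finset ℕ)) (n : ℕ) : FinGraph where
  verts := joinVerts G Om n
  Adj v w := G.Adj v w ∨ (shiftG n Om).Adj v w ∨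
    (v ≠ w ∧ v ∈ joinVerts G Om n ∧ w ∈ joinVerts G Om n ∧
      ((v = joinA G T ∧ w = joinB Om S n) ∨ (w = joinA G T ∧ v = joinB Om S n)))
  symm := by
    rintro v w (h | h | ⟨hne, hv, hw, hc⟩)
    · exact Or.inl (G.symm _ _ h)
    · exact Or.inr (Or.inl ((shiftG n Om).symm _ _ h))
    · exact Or.inr (Or.inr ⟨hne.symm, hw, hv, hc.symm⟩)
  loopless := by
    rintro v (h | h | ⟨hne, _⟩)
    · exact G.loopless v h
    · exact (shiftG n Om).loopless v h
    · exact hne rfl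
  support := by
    rintro v w (h | h | ⟨_, hv, hw, _⟩)
    · exact ⟨Finset.mem_union_left _ (G.support _ _ h).1,
        Finset.mem_union_left _ (G.support _ _ h).2⟩
    · exact ⟨Finset.mem_union_right _ ((shiftG n Om).support _ _ h).1,
        Finset.mem_union_right _ ((shiftG n Om).support _ _ h).2⟩
    · exact ⟨hv, hw⟩

/-- `T ▷ S`. -/
def trR (G Om : FinGraph) (T S : Finset (Finset ℕ)) (n : ℕ) : Finset (Finset ℕ) :=
  T ∪ shiftT n (properTubes Om S) ∪ {joinVerts G Om n}

/-- `T ◁ S`. -/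
def trL (G Om : FinGraph) (T S : Finset (Finset ℕ)) (n : ℕ) : Finset (Finset ℕ) :=
  properTubes G T ∪ shiftT n S ∪ {joinVerts G Om n}

/-- `T ⊥ S`. -/
def tPerp (G Om : FinGraph) (T S : Finset (Finset ℕ)) (n : ℕ) : Finset (Finset ℕ) :=
  properTubes G T ∪ shiftT n (properTubes Om S) ∪ {joinVerts G Om n}

/-- Equality of graphs: same vertex set and same edges. -/
def GEq (A B : FinGraph) : Prop :=
  A.verts = B.verts ∧ ∀ v w, A.Adj v w ↔ B.Adj v w

/-- Index type for the basis of `Tub⁺`: `none` is the unit `1`, `some (Γ,T)` is a pair. -/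
abbrev TubIdx : Type := Option (FinGraph × Finset (Finset ℕ))

/-- A pair `(Γ,T)` relabelled order-preservingly to standard vertex set, identified
with the unit `1` when the vertex set is empty. -/
def embPair (G : FinGraph) (T : Finset (Finset ℕ)) : TubIdx :=
  if G.verts = ∅ then none else some (relabelG G, relabelT G.verts T)

/-- The value of the pre-Lie coproduct `Δ_•` on a basis element. -/
def deltaFun (K : Type) [CommRing K] (i : TubIdx) :
    (TubIdx →₀ K) ⊗[K] (TubIdx →₀ K) :=
  match i with
  | none => Finsupp.single (none : TubIdx) (1 : K) ⊗ₜ[K] Finsupp.single (none : TubIdx) (1 : K)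
  | some (G, T) =>
      (∑ t ∈ T, (Finsupp.single (embPair (induce G t) (restrictT T t)) (1 : K)) ⊗ₜ[K]
        (Finsupp.single (embPair (reconn G t) (indStar T t)) (1 : K)))
      + (Finsupp.single (none : TubIdx) (1 : K)) ⊗ₜ[K]
          (Finsupp.single (some (G, T) : TubIdx) (1 : K))

/-- The pre-Lie coproduct `Δ_•` on `Tub⁺`, the free module on `TubIdx`. -/
def delta (K : Type) [CommRing K] :
    (TubIdx →₀ K) →ₗ[K] (TubIdx →₀ K) ⊗[K] (TubIdx →₀ K) :=
  Finsupp.lift ((TubIdx →₀ K) ⊗[K] (TubIdx →₀ K)) K TubIdx (deltaFun K)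

end CDTub

namespace CDTub

variable {G : FinGraph} {T S : Finset (Finset ℕ)}

private lemma rtg_symm {R : ℕ → ℕ → Prop} (hR : ∀ a b, R a b → R b a) {v w : ℕ}
    (h : Relation.ReflTransGen R v w) : Relation.ReflTransGen R w v := by
  induction h with
  | refl => exact .refl
  | tail _ hstep ih => exact Relation.ReflTransGen.head (hR _ _ hstep) ih

private lemma rtg_lift {R R' : ℕ → ℕ → Prop}
    (h : ∀ a b, R' a b → Relation.ReflTransGen R a b)
    {v w : ℕ} (hw : Relation.ReflTransGen R' v w) : Relation.ReflTransGen R v w := by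
  induction hw with
  | refl => exact .refl
  | tail _ hstep ih => exact ih.trans (h _ _ hstep)

private lemma mem_maxtP {m : Finset ℕ} (h : m ∈ MaxtP G T) :
    m ∈ T ∧ m ≠ G.verts ∧ ∀ s' ∈ T, s' ≠ G.verts → m ⊆ s' → m = s' := by
  simp only [MaxtP, properTubes, Finset.mem_filter] at h
  exact ⟨h.1.1, h.1.2, fun s' hs' hne hsub => h.2 s' ⟨hs', hne⟩ hsub⟩

private lemma exists_maxt {t : Finset ℕ} (ht : t ∈ T) (hne : t ≠ G.verts) :
    ∃ m ∈ MaxtP G T, t ⊆ m := by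
  classical
  set P := (properTubes G T).filter (fun p => t ⊆ p) with hP
  have hPne : P.Nonempty := ⟨t, by simp [hP, properTubes, ht, hne]⟩
  obtain ⟨m, hm, hmax⟩ := P.exists_max_image Finset.card hPne
  have hmP : m ∈ properTubes G T := (Finset.mem_filter.mp hm).1
  have htm : t ⊆ m := (Finset.mem_filter.mp hm).2
  refine ⟨m, ?_, htm⟩
  simp only [MaxtP, Finset.mem_filter]
  refine ⟨hmP, fun s' hs' hsub => ?_⟩
  have hsP : s' ∈ P := Finset.mem_filter.mpr ⟨hs', htm.trans hsub⟩
  exact Finset.eq_of_subset_of_card_le hsub (hmax s' hsP)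

private lemma maxt_farApart (hT : IsTubing G T) {m m' : Finset ℕ}
    (hm : m ∈ MaxtP G T) (hm' : m' ∈ MaxtP G T) (hne : m ≠ m') : FarApart G m m' := by
  obtain ⟨hmT, hmp, hmmax⟩ := mem_maxtP hm
  obtain ⟨hm'T, hm'p, hm'max⟩ := mem_maxtP hm'
  rcases hT.2.2 m hmT m' hm'T hne with h | h | h
  · exact absurd (hmmax m' hm'T hm'p h) hne
  · exact absurd (hm'max m hmT hmp h).symm hne
  · exact h

private lemma disjoint_star {s m : Finset ℕ} (hs : s ⊆ (gammaStar G T).verts)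
    (hm : m ∈ MaxtP G T) : Disjoint m s := by
  rw [Finset.disjoint_right]
  intro v hv hvm
  have h := hs hv
  simp only [gammaStar, reconnAll, Finset.mem_sdiff, Finset.mem_biUnion] at h
  exact h.2 ⟨m, hm, hvm⟩

private lemma star_verts_subset : (gammaStar G T).verts ⊆ G.verts := by
  intro v hv
  simp only [gammaStar, reconnAll, Finset.mem_sdiff] at hv
  exact hv.1

private lemma star_adj_iff {v w : ℕ} : (gammaStar G T).Adj v w ↔
    v ≠ w ∧ v ∈ (gammaStar G T).verts ∧ w ∈ (gammaStar G T).verts ∧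
      (G.Adj v w ∨ ∃ f ∈ MaxtP G T, (∃ u ∈ f, G.Adj v u) ∧ ∃ u' ∈ f, G.Adj w u') :=
  Iff.rfl

private lemma mem_tildeT {s : Finset ℕ} {v : ℕ} :
    v ∈ tildeT G T s ↔ v ∈ s ∨ ∃ m ∈ MaxtP G T, Linked G m s ∧ v ∈ m := by
  simp only [tildeT, Finset.mem_union, Finset.mem_biUnion, Finset.mem_filter, id]
  tauto

private lemma tildeT_subset_verts (hT : IsTubing G T) {s : Finset ℕ}
    (hs : s ⊆ (gammaStar G T).verts) : tildeT G T s ⊆ G.verts := by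
  intro v hv
  rcases mem_tildeT.mp hv with h | ⟨m, hm, _, hvm⟩
  · exact star_verts_subset (hs h)
  · exact (hT.2.1 m (mem_maxtP hm).1).2.1 hvm

private lemma tildeT_isTube (hT : IsTubing G T) {s : Finset ℕ}
    (hs : IsTube (gammaStar G T) s) : IsTube G (tildeT G T s) := by
  obtain ⟨hsne, hsv, hsc⟩ := hs
  set R := fun a b => a ∈ tildeT G T s ∧ b ∈ tildeT G T s ∧ G.Adj a b with hRdef
  have hRsymm : ∀ a b, R a b → R b a := fun a b ⟨h1, h2, h3⟩ => ⟨h2, h1, G.symm _ _ h3⟩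
  have hmemM : ∀ m ∈ MaxtP G T, Linked G m s → m ⊆ tildeT G T s :=
    fun m hm hl v hv => mem_tildeT.mpr (Or.inr ⟨m, hm, hl, hv⟩)
  have hmemS : s ⊆ tildeT G T s := fun v hv => mem_tildeT.mpr (Or.inl hv)
  have stepA : ∀ m ∈ MaxtP G T, Linked G m s → ∀ v ∈ m,
      ∃ q ∈ s, Relation.ReflTransGen R v q := by
    rintro m hm hl v hv
    obtain ⟨hd, u, hu, q, hq, huq⟩ := hl
    have hl' : Linked G m s := ⟨hd, u, hu, q, hq, huq⟩
    have hmT : IsTube G m := hT.2.1 m (mem_maxtP hm).1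
    have walk1 : Relation.ReflTransGen R v u :=
      rtg_lift (fun a b hab => Relation.ReflTransGen.single
        ⟨hmemM m hm hl' hab.1, hmemM m hm hl' hab.2.1, hab.2.2⟩) (hmT.2.2 v hv u hu)
    exact ⟨q, hq, walk1.tail ⟨hmemM m hm hl' hu, hmemS hq, huq⟩⟩
  have lift : ∀ a b, (a ∈ s ∧ b ∈ s ∧ (gammaStar G T).Adj a b) →
      Relation.ReflTransGen R a b := by
    rintro a b ⟨ha, hb, hadj⟩
    obtain ⟨hne, hav, hbv, hor⟩ := star_adj_iff.mp hadj
    rcases hor with hGab | ⟨f, hf, ⟨u, hu, hau⟩, ⟨u', hu', hbu'⟩⟩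
    · exact Relation.ReflTransGen.single ⟨hmemS ha, hmemS hb, hGab⟩
    · have hlf : Linked G f s := ⟨disjoint_star hsv hf, u, hu, a, ha, G.symm _ _ hau⟩
      have hfT : IsTube G f := hT.2.1 f (mem_maxtP hf).1
      have w1 : Relation.ReflTransGen R u u' :=
        rtg_lift (fun x y hxy => Relation.ReflTransGen.single
          ⟨hmemM f hf hlf hxy.1, hmemM f hf hlf hxy.2.1, hxy.2.2⟩) (hfT.2.2 u hu u' hu')
      exact (Relation.ReflTransGen.single
        ⟨hmemS ha, hmemM f hf hlf hu, hau⟩).trans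
        (w1.trans (Relation.ReflTransGen.single
          ⟨hmemM f hf hlf hu', hmemS hb, G.symm _ _ hbu'⟩))
  have toS : ∀ v ∈ tildeT G T s, ∃ q ∈ s, Relation.ReflTransGen R v q := by
    intro v hv
    rcases mem_tildeT.mp hv with h | ⟨m, hm, hl, hvm⟩
    · exact ⟨v, h, .refl⟩
    · exact stepA m hm hl v hvm
  obtain ⟨x, hx⟩ := hsne
  refine ⟨⟨x, hmemS hx⟩, tildeT_subset_verts hT hsv, ?_⟩
  intro v hv w hw
  obtain ⟨q, hq, wq⟩ := toS v hv
  obtain ⟨q', hq', wq'⟩ := toS w hw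
  exact (wq.trans (rtg_lift lift (hsc q hq q' hq'))).trans (rtg_symm hRsymm wq')

private lemma tildeT_mono {s s' : Finset ℕ} (hsub : s ⊆ s')
    (hs' : s' ⊆ (gammaStar G T).verts) : tildeT G T s ⊆ tildeT G T s' := by
  intro v hv
  rw [mem_tildeT] at hv ⊢
  rcases hv with h | ⟨m, hm, ⟨hd, u, hu, w, hw, hadj⟩, hvm⟩
  · exact Or.inl (hsub h)
  · exact Or.inr ⟨m, hm, ⟨disjoint_star hs' hm, u, hu, w, hsub hw, hadj⟩, hvm⟩

private lemma tildeT_farApart (hT : IsTubing G T) {s s' : Finset ℕ}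
    (hs : s ⊆ (gammaStar G T).verts) (hs' : s' ⊆ (gammaStar G T).verts)
    (hfa : FarApart (gammaStar G T) s s') :
    FarApart G (tildeT G T s) (tildeT G T s') := by
  obtain ⟨hdisj, hnoe⟩ := hfa
  have key : ∀ m ∈ MaxtP G T, Linked G m s → Linked G m s' → False := by
    rintro m hm ⟨_, u, hu, v, hv, huv⟩ ⟨_, u', hu', w, hw, hu'w⟩
    have hvw : v ≠ w := fun h => Finset.disjoint_left.mp hdisj hv (h ▸ hw)
    exact hnoe ⟨v, hv, w, hw, star_adj_iff.mpr ⟨hvw, hs hv, hs' hw,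
      Or.inr ⟨m, hm, ⟨u, hu, G.symm _ _ huv⟩, ⟨u', hu', G.symm _ _ hu'w⟩⟩⟩⟩
  constructor
  · rw [Finset.disjoint_left]
    intro v hv hv'
    rw [mem_tildeT] at hv hv'
    rcases hv with h | ⟨m, hm, hlm, hvm⟩ <;> rcases hv' with h' | ⟨m', hm', hlm', hvm'⟩
    · exact Finset.disjoint_left.mp hdisj h h'
    · exact Finset.disjoint_left.mp (disjoint_star hs hm') hvm' h
    · exact Finset.disjoint_left.mp (disjoint_star hs' hm) hvm h'
    · by_cases hmm : m = m'
      · exact key m hm hlm (hmm ▸ hlm')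
      · exact Finset.disjoint_left.mp (maxt_farApart hT hm hm' hmm).1 hvm hvm'
  · rintro ⟨v, hv, w, hw, hvw⟩
    rw [mem_tildeT] at hv hw
    rcases hv with h | ⟨m, hm, hlm, hvm⟩ <;> rcases hw with h' | ⟨m', hm', hlm', hvm'⟩
    · have hne : v ≠ w := fun hh => Finset.disjoint_left.mp hdisj h (hh ▸ h')
      exact hnoe ⟨v, h, w, h', star_adj_iff.mpr ⟨hne, hs h, hs' h', Or.inl hvw⟩⟩
    · exact key m' hm' ⟨disjoint_star hs hm', w, hvm', v, h, G.symm _ _ hvw⟩ hlm'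
    · exact key m hm hlm ⟨disjoint_star hs' hm, v, hvm, w, h', hvw⟩
    · by_cases hmm : m = m'
      · exact key m hm hlm (hmm ▸ hlm')
      · exact (maxt_farApart hT hm hm' hmm).2 ⟨v, hvm, w, hvm', hvw⟩

private lemma farApart_symm {a b : Finset ℕ} (h : FarApart G a b) : FarApart G b a := by
  refine ⟨h.1.symm, ?_⟩
  rintro ⟨v, hv, w, hw, hvw⟩
  exact h.2 ⟨w, hw, v, hv, G.symm _ _ hvw⟩

private lemma compatible_symm {a b : Finset ℕ} (h : Compatible G a b) :
    Compatible G b a := by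
  rcases h with h | h | h
  · exact Or.inr (Or.inl h)
  · exact Or.inl h
  · exact Or.inr (Or.inr (farApart_symm h))

private lemma compat_T_tilde (hT : IsTubing G T) {t : Finset ℕ} (ht : t ∈ T)
    {s : Finset ℕ} (hs : s ⊆ (gammaStar G T).verts) :
    Compatible G t (tildeT G T s) := by
  by_cases hu : t = G.verts
  · exact Or.inr (Or.inl (hu ▸ tildeT_subset_verts hT hs))
  obtain ⟨m, hm, htm⟩ := exists_maxt ht hu
  by_cases hl : Linked G m s
  · exact Or.inl (htm.trans (fun v hv => mem_tildeT.mpr (Or.inr ⟨m, hm, hl, hv⟩)))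
  refine Or.inr (Or.inr ⟨?_, ?_⟩)
  · rw [Finset.disjoint_left]
    intro v hv hv'
    rcases mem_tildeT.mp hv' with h | ⟨m', hm', hlm', hvm'⟩
    · exact Finset.disjoint_left.mp (disjoint_star hs hm) (htm hv) h
    · have hmm : m ≠ m' := fun hh => hl (hh ▸ hlm')
      exact Finset.disjoint_left.mp (maxt_farApart hT hm hm' hmm).1 (htm hv) hvm'
  · rintro ⟨v, hv, w, hw, hvw⟩
    rcases mem_tildeT.mp hw with h | ⟨m', hm', hlm', hvm'⟩
    · exact hl ⟨disjoint_star hs hm, v, htm hv, w, h, hvw⟩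
    · have hmm : m ≠ m' := fun hh => hl (hh ▸ hlm')
      exact (maxt_farApart hT hm hm' hmm).2 ⟨v, htm hv, w, hvm', hvw⟩

private lemma substT_isTubing (hT : IsTubing G T)
    (hS : IsTubing (gammaStar G T) S) : IsTubing G (substT G T S) := by
  have hsub : ∀ s ∈ S, s ⊆ (gammaStar G T).verts := fun s hs => (hS.2.1 s hs).2.1
  refine ⟨Finset.mem_union_left _ hT.1, ?_, ?_⟩
  · intro x hx
    rcases Finset.mem_union.mp hx with h | h
    · exact hT.2.1 x h
    · obtain ⟨s, hsS, rfl⟩ := Finset.mem_image.mp h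
      exact tildeT_isTube hT (hS.2.1 s hsS)
  · intro x hx y hy hne
    rcases Finset.mem_union.mp hx with h | h <;> rcases Finset.mem_union.mp hy with h' | h'
    · exact hT.2.2 x h y h' hne
    · obtain ⟨s, hsS, rfl⟩ := Finset.mem_image.mp h'
      exact compat_T_tilde hT h (hsub s hsS)
    · obtain ⟨s, hsS, rfl⟩ := Finset.mem_image.mp h
      exact compatible_symm (compat_T_tilde hT h' (hsub s hsS))
    · obtain ⟨s, hsS, rfl⟩ := Finset.mem_image.mp h
      obtain ⟨s', hs'S, rfl⟩ := Finset.mem_image.mp h'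
      have hss : s ≠ s' := fun hh => hne (hh ▸ rfl)
      rcases hS.2.2 s hsS s' hs'S hss with hc | hc | hc
      · exact Or.inl (tildeT_mono hc (hsub s' hs'S))
      · exact Or.inr (Or.inl (tildeT_mono hc (hsub s hsS)))
      · exact Or.inr (Or.inr (tildeT_farApart hT (hsub s hsS) (hsub s' hs'S) hc))

private lemma isTube_of_induce {t w : Finset ℕ} (ht : t ⊆ G.verts)
    (h : IsTube (induce G t) w) : IsTube G w :=
  ⟨h.1, fun v hv => ht (h.2.1 hv), fun v hv u hu => rtg_lift
    (fun a b hab => Relation.ReflTransGen.single ⟨hab.1, hab.2.1, hab.2.2.2.2⟩) (h.2.2 v hv u hu)⟩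

private lemma compatible_of_induce {t a b : Finset ℕ} (ha : a ⊆ t) (hb : b ⊆ t)
    (h : Compatible (induce G t) a b) : Compatible G a b := by
  rcases h with h | h | ⟨hd, hne⟩
  · exact Or.inl h
  · exact Or.inr (Or.inl h)
  · refine Or.inr (Or.inr ⟨hd, ?_⟩)
    rintro ⟨v, hv, w, hw, hvw⟩
    exact hne ⟨v, hv, w, hw, ha hv, hb hw, hvw⟩

private lemma compatible_to_induce {t a b : Finset ℕ} (h : Compatible G a b) :
    Compatible (induce G t) a b := by
  rcases h with h | h | ⟨hd, hne⟩
  · exact Or.inl h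
  · exact Or.inr (Or.inl h)
  · refine Or.inr (Or.inr ⟨hd, ?_⟩)
    rintro ⟨v, hv, w, hw, hvw⟩
    exact hne ⟨v, hv, w, hw, hvw.2.2⟩

private lemma restrict_isTubing (hT : IsTubing G T) {t : Finset ℕ} (ht : t ∈ T) :
    IsTubing (induce G t) (restrictT T t) := by
  refine ⟨Finset.mem_filter.mpr ⟨ht, Finset.Subset.refl t⟩, ?_, ?_⟩
  · intro s hsm
    obtain ⟨hsT, hst⟩ := Finset.mem_filter.mp hsm
    obtain ⟨hne, hsv, hsc⟩ := hT.2.1 s hsT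
    exact ⟨hne, hst, fun v hv w hw => rtg_lift
      (fun a b hab => Relation.ReflTransGen.single ⟨hab.1, hab.2.1, hst hab.1, hst hab.2.1, hab.2.2⟩) (hsc v hv w hw)⟩
  · intro a haM b hbM hne
    exact compatible_to_induce
      (hT.2.2 a (Finset.mem_filter.mp haM).1 b (Finset.mem_filter.mp hbM).1 hne)

end CDTub

open CDTub in
/-- Substitution produces tubings: for a tubing `S` of `Γ_T^*`, `T •_Γ S` is a tubing of
`Γ` containing `T`; more generally, for `t ∈ T` and a tubing `S` of `(Γ_t)_{T|_t}^*`,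
the `t`-substitution `γ_t(T;S)` is a tubing of `Γ` containing `T`. -/
theorem substitution_is_tubing (G : FinGraph) (hc : IsConnGraph G)
    (T : Finset (Finset ℕ)) (hT : IsTubing G T) :
    (∀ S : Finset (Finset ℕ), IsTubing (gammaStar G T) S →
      IsTubing G (substT G T S) ∧ T ⊆ substT G T S) ∧
    (∀ t ∈ T, ∀ S : Finset (Finset ℕ),
      IsTubing (gammaStar (induce G t) (restrictT T t)) S →
        IsTubing G (gammaSub G T t S) ∧ T ⊆ gammaSub G T t S) := by
  constructor
  · intro S hS
    exact ⟨substT_isTubing hT hS, Finset.subset_union_left⟩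
  · intro t ht S hS
    have htube : IsTube G t := hT.2.1 t ht
    have hrT : IsTubing (induce G t) (restrictT T t) := restrict_isTubing hT ht
    have hW : IsTubing (induce G t) (substT (induce G t) (restrictT T t) S) :=
      substT_isTubing hrT hS
    set W := substT (induce G t) (restrictT T t) S with hWdef
    have hwt : ∀ w ∈ W, w ⊆ t := fun w hw => (hW.2.1 w hw).2.1
    show IsTubing G (T ∪ W) ∧ T ⊆ T ∪ W
    refine ⟨⟨Finset.mem_union_left _ hT.1, ?_, ?_⟩, Finset.subset_union_left⟩
    · intro x hx
      rcases Finset.mem_union.mp hx with h | h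
      · exact hT.2.1 x h
      · exact isTube_of_induce htube.2.1 (hW.2.1 x h)
    · have compTW : ∀ t' ∈ T, ∀ w ∈ W, t' ≠ w → Compatible G t' w := by
        intro t' ht' w hw hne'
        by_cases htt : t' = t
        · exact Or.inr (Or.inl (htt ▸ hwt w hw))
        rcases hT.2.2 t' ht' t ht htt with hc | hc | hc
        · have ht'W : t' ∈ W :=
            Finset.mem_union_left _ (Finset.mem_filter.mpr ⟨ht', hc⟩)
          exact compatible_of_induce hc (hwt w hw) (hW.2.2 t' ht'W w hw hne')
        · exact Or.inr (Or.inl ((hwt w hw).trans hc))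
        · refine Or.inr (Or.inr ⟨hc.1.mono_right (hwt w hw), ?_⟩)
          rintro ⟨v, hv, u, hu, hvu⟩
          exact hc.2 ⟨v, hv, u, hwt w hw hu, hvu⟩
      intro x hx y hy hne
      rcases Finset.mem_union.mp hx with h | h <;> rcases Finset.mem_union.mp hy with h' | h'
      · exact hT.2.2 x h y h' hne
      · exact compTW x h y h' hne
      · exact compatible_symm (compTW y h' x h hne.symm)
      · exact compatible_of_induce (hwt x h) (hwt y h') (hW.2.2 x h y h' hne)
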